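/- Rank lower bound from dipoles: for a connected subgraph H of a rank-4 TGFT graph, the rank r(H) of the line–internal-face incidence matrix ε_{ef} satisfies r(H) ≥ D₂(H) + D₃(H) + D₄(H) + D₅(H), where D_p is the number of p-dipole lines of H for p≥2. -/

import Mathlib

open Finset
open scoped Classical

noncomputable section

/-- Support of an internal face: the lines it is incident to (`ε_{ef} ≠ 0`). -/
def faceSupp (Line Face : Type) [Fintype Line] (incid : Face → Line → ℤ) (f : Face) :
    Finset Line :=
  univ.filter fun e => incid f e ≠ 0

/-- Number of `p`-dipole lines: lines carrying exactly `p - 1` internal faces of length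
one (a `p`-dipole contains `p - 1` internal faces passing only through it). -/
def nDipoles (Line Face : Type) [Fintype Line] [Fintype Face]
    (incid : Face → Line → ℤ) (p : ℕ) : ℕ :=
  (univ.filter fun e : Line =>
      (univ.filter fun f : Face =>
          incid f e ≠ 0 ∧ (faceSupp Line Face incid f).card = 1).card = p - 1).card

/-- Rank of the line–(internal-)face incidence matrix `ε_{ef}` (over ℚ). -/
def epsRank (Line Face : Type) [Fintype Line] [Fintype Face]
    (incid : Face → Line → ℤ) : ℕ :=
  Matrix.rank (Matrix.of fun (f : Face) (e : Line) => (incid f e : ℚ))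

/-- **Rank lower bound from dipoles.**  For a connected subgraph `H` of a rank-4 TGFT
graph, the rank `r(H)` of the line–internal-face incidence matrix satisfies
`r(H) ≥ D₂(H) + D₃(H) + D₄(H) + D₅(H)`, `D_p` being the number of `p`-dipole lines. -/
theorem rank_lower_bound_from_dipoles
    (Line Face : Type) [Fintype Line] [Fintype Face]
    (incid : Face → Line → ℤ)
    (hsign : ∀ f e, incid f e = -1 ∨ incid f e = 0 ∨ incid f e = 1)
    (hrank4 : ∀ e : Line, (univ.filter fun f : Face => incid f e ≠ 0).card ≤ 4)
    (hconn : ∀ e e' : Line,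
        Relation.EqvGen (fun x y => ∃ f : Face, incid f x ≠ 0 ∧ incid f y ≠ 0) e e') :
    nDipoles Line Face incid 2 + nDipoles Line Face incid 3 +
        nDipoles Line Face incid 4 + nDipoles Line Face incid 5 ≤
      epsRank Line Face incid := by
  classical
  set cnt : Line → ℕ := fun e =>
    (univ.filter fun f : Face =>
        incid f e ≠ 0 ∧ (faceSupp Line Face incid f).card = 1).card with hcnt
  have hDip : ∀ p : ℕ, nDipoles Line Face incid p
      = (univ.filter fun e : Line => cnt e = p - 1).card := fun p => rfl
  have hcnt_le : ∀ e : Line, cnt e ≤ 4 := by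
    intro e
    refine le_trans (Finset.card_le_card ?_) (hrank4 e)
    intro f hf
    simp only [mem_filter, mem_univ, true_and] at hf ⊢
    exact hf.1
  set S : Finset Line := univ.filter fun e => 1 ≤ cnt e with hS
  -- the four dipole sets partition S
  have hsum : nDipoles Line Face incid 2 + nDipoles Line Face incid 3 +
      nDipoles Line Face incid 4 + nDipoles Line Face incid 5 = S.card := by
    rw [hDip, hDip, hDip, hDip]
    set A : ℕ → Finset Line := fun k => univ.filter fun e : Line => cnt e = k with hA
    have hd : ∀ k l : ℕ, k ≠ l → Disjoint (A k) (A l) := by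
      intro k l hkl
      rw [Finset.disjoint_left]
      intro a ha hb
      rw [hA] at ha hb
      simp only [mem_filter, mem_univ, true_and] at ha hb
      omega
    have hU : S = (A 1 ∪ A 2) ∪ (A 3 ∪ A 4) := by
      ext e
      have := hcnt_le e
      simp only [hS, hA, mem_filter, mem_univ, true_and, mem_union]
      omega
    have d12 : Disjoint (A 1) (A 2) := hd 1 2 (by norm_num)
    have d34 : Disjoint (A 3) (A 4) := hd 3 4 (by norm_num)
    have d : Disjoint (A 1 ∪ A 2) (A 3 ∪ A 4) := by
      rw [Finset.disjoint_union_left]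
      constructor <;> rw [Finset.disjoint_union_right] <;>
        exact ⟨hd _ _ (by norm_num), hd _ _ (by norm_num)⟩
    rw [hU, card_union_of_disjoint d, card_union_of_disjoint d12,
      card_union_of_disjoint d34]
    ring_nf
    rfl
  rw [hsum]
  -- choose for each e ∈ S a face supported exactly on e
  have hchoice : ∀ e ∈ S, ∃ f : Face, faceSupp Line Face incid f = {e} := by
    intro e he
    simp only [hS, mem_filter, mem_univ, true_and] at he
    obtain ⟨f, hf⟩ := Finset.card_pos.mp (lt_of_lt_of_le Nat.zero_lt_one he)
    simp only [mem_filter, mem_univ, true_and] at hf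
    obtain ⟨a, ha⟩ := Finset.card_eq_one.mp hf.2
    refine ⟨f, ?_⟩
    have he' : e ∈ faceSupp Line Face incid f := by
      simp [faceSupp, hf.1]
    rw [ha] at he' ⊢
    simp only [mem_singleton] at he'
    rw [he']
  choose wit hwit using hchoice
  -- linear independence of the corresponding columns
  set M : Matrix Face Line ℚ := Matrix.of fun f e => (incid f e : ℚ) with hM
  set col : S → (Face → ℚ) := fun e => fun f => M f e.1 with hcol
  have hzero : ∀ (e : S) (e' : Line), e' ≠ e.1 → incid (wit e.1 e.2) e' = 0 := by
    intro e e' hne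
    by_contra h
    have : e' ∈ faceSupp Line Face incid (wit e.1 e.2) := by simp [faceSupp, h]
    rw [hwit e.1 e.2] at this
    exact hne (mem_singleton.mp this)
  have hdiag : ∀ e : S, incid (wit e.1 e.2) e.1 ≠ 0 := by
    intro e
    have : e.1 ∈ faceSupp Line Face incid (wit e.1 e.2) := by
      rw [hwit e.1 e.2]; exact mem_singleton_self _
    simpa [faceSupp] using this
  have hli : LinearIndependent ℚ col := by
    rw [Fintype.linearIndependent_iff]
    intro g hg e
    have := congrFun hg (wit e.1 e.2)
    simp only [Finset.sum_apply, Pi.smul_apply, smul_eq_mul, Pi.zero_apply] at this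
    rw [Finset.sum_eq_single e] at this
    · have hd : (incid (wit e.1 e.2) e.1 : ℚ) ≠ 0 := by
        exact_mod_cast hdiag e
      have : g e * (incid (wit e.1 e.2) e.1 : ℚ) = 0 := this
      exact (mul_eq_zero.mp this).resolve_right hd
    · intro b _ hb
      have : incid (wit e.1 e.2) b.1 = 0 := by
        apply hzero e
        intro h
        exact hb (Subtype.ext h)
      simp [hcol, hM, this]
    · intro h; exact absurd (mem_univ e) h
  -- columns lie in the range of mulVecLin
  have hmem : ∀ e : S, col e ∈ LinearMap.range M.mulVecLin := by
    intro e
    refine ⟨Pi.single e.1 1, ?_⟩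
    ext f
    simp [Matrix.mulVecLin_apply, Matrix.mulVec_single, hcol]
  set col' : S → LinearMap.range M.mulVecLin := fun e => ⟨col e, hmem e⟩ with hcol'
  have hli' : LinearIndependent ℚ col' := by
    apply LinearIndependent.of_comp (LinearMap.range M.mulVecLin).subtype
    convert hli <;> rfl
  have := hli'.fintype_card_le_finrank
  simpa [epsRank, Matrix.rank, ← hM, Fintype.card_coe] using this

end
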